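/- Let f_k and Φ_k, Ψ_k evolve under the Darboux recursion f_{k+1} = −2 𝒟_θ ln Φ_k − f_k, Ψ_{k+1} = Φ_k^{−1}, Φ_{k+1} = Φ_k ∂_x ln Φ_k + Φ_k 𝒟_θ f_k + Φ_k² Ψ_k. If the constraint 2 Φ_0 Ψ_0 + 𝒟_θ f_0 = 0 holds initially, then 2 Φ_{k+1} Ψ_{k+1} + 𝒟_θ f_{k+1} = 2 Φ_k Ψ_k + 𝒟_θ f_k for all k, hence the constraint 2 Φ_k Ψ_k + 𝒟_θ f_k = 0 is preserved for all k ≥ 0. -/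
import Mathlib


/- In the ring of superfields on `(x,θ)` (a ring `R` with parity predicates `ev`, `od`,
odd superderivative `Dθ` with `Dθ² = ∂_x`, graded Leibniz rules, even elements central
and odd elements anticommuting), the Darboux recursion
`f_{k+1} = −2𝒟_θ ln Φ_k − f_k`, `Ψ_{k+1} = Φ_k⁻¹`,
`Φ_{k+1} = Φ_k ∂_x ln Φ_k + Φ_k 𝒟_θ f_k + Φ_k² Ψ_k`
preserves the quantity `2 Φ_k Ψ_k + 𝒟_θ f_k`; hence if the constraint
`2 Φ_0 Ψ_0 + 𝒟_θ f_0 = 0` holds initially it holds for all `k`. -/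
theorem stmt_7 {R : Type*} [Ring R]
    (ev od : R → Prop) (Dθ dx : R → R)
    (hDθ_add : ∀ a b, Dθ (a + b) = Dθ a + Dθ b)
    (hDθ_neg : ∀ a, Dθ (-a) = -(Dθ a))
    (hdx_add : ∀ a b, dx (a + b) = dx a + dx b)
    (hdx_leib : ∀ a b, dx (a * b) = dx a * b + a * dx b)
    (hDθsq : ∀ a, Dθ (Dθ a) = dx a)
    (hLeib_ev : ∀ a b, ev a → Dθ (a * b) = Dθ a * b + a * Dθ b)
    (hLeib_od : ∀ a b, od a → Dθ (a * b) = Dθ a * b - a * Dθ b)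
    (hev_central : ∀ a b, ev a → a * b = b * a)
    (hod_sq : ∀ a, od a → a * a = 0)
    (hDθ_ev : ∀ a, ev a → od (Dθ a))
    (hDθ_od : ∀ a, od a → ev (Dθ a))
    (hmul_ev : ∀ a b, ev a → ev b → ev (a * b))
    (hmul_od : ∀ a b, od a → od b → ev (a * b))
    (hmul_eo : ∀ a b, ev a → od b → od (a * b))
    (f Φ Ψ Φinv : ℕ → R)
    (hf_od : ∀ k, od (f k)) (hΦ_ev : ∀ k, ev (Φ k)) (hΨ_ev : ∀ k, ev (Ψ k))
    (hΦinv_ev : ∀ k, ev (Φinv k))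
    (hinv : ∀ k, Φ k * Φinv k = 1) (hinv' : ∀ k, Φinv k * Φ k = 1)
    (hfrec : ∀ k, f (k+1) = -(2 * (Φinv k * Dθ (Φ k))) - f k)
    (hΨrec : ∀ k, Ψ (k+1) = Φinv k)
    (hΦrec : ∀ k, Φ (k+1) = Φ k * (Φinv k * dx (Φ k)) + Φ k * Dθ (f k) + Φ k * Φ k * Ψ k)
    (hconstr0 : 2 * (Φ 0 * Ψ 0) + Dθ (f 0) = 0) :
    (∀ k, 2 * (Φ (k+1) * Ψ (k+1)) + Dθ (f (k+1)) = 2 * (Φ k * Ψ k) + Dθ (f k)) ∧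
    (∀ k, 2 * (Φ k * Ψ k) + Dθ (f k) = 0) := by

  -- Dθ 1 = 0
  have hΦD1 : Φ 0 * Dθ (1:R) = 0 := by
    have h := hLeib_ev (Φ 0) 1 (hΦ_ev 0)
    rw [mul_one, mul_one] at h
    exact add_eq_left.mp h.symm
  have hDθ1 : Dθ (1:R) = 0 := by
    calc Dθ (1:R) = Φinv 0 * (Φ 0 * Dθ 1) := by rw [← mul_assoc, hinv' 0, one_mul]
    _ = 0 := by rw [hΦD1, mul_zero]
  -- key: Dθ(Φinv k) * Dθ(Φ k) = 0
  have hkey : ∀ k, Dθ (Φinv k) * Dθ (Φ k) = 0 := by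
    intro k
    have h := hLeib_ev (Φinv k) (Φ k) (hΦinv_ev k)
    rw [hinv' k, hDθ1] at h
    have h2 : Dθ (Φinv k) * Φ k = -(Φinv k * Dθ (Φ k)) :=
      eq_neg_of_add_eq_zero_left h.symm
    have h3 : Dθ (Φinv k) = -(Φinv k * Φinv k * Dθ (Φ k)) := by
      calc Dθ (Φinv k) = Dθ (Φinv k) * Φ k * Φinv k := by
            rw [mul_assoc, hinv k, mul_one]
      _ = -(Φinv k * Dθ (Φ k)) * Φinv k := by rw [h2]
      _ = -(Φinv k * (Dθ (Φ k) * Φinv k)) := by noncomm_ring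
      _ = -(Φinv k * (Φinv k * Dθ (Φ k))) := by
            rw [← hev_central (Φinv k) (Dθ (Φ k)) (hΦinv_ev k)]
      _ = -(Φinv k * Φinv k * Dθ (Φ k)) := by rw [mul_assoc]
    have hsq : Dθ (Φ k) * Dθ (Φ k) = 0 := hod_sq _ (hDθ_ev _ (hΦ_ev k))
    calc Dθ (Φinv k) * Dθ (Φ k)
        = -(Φinv k * Φinv k * Dθ (Φ k)) * Dθ (Φ k) := by rw [h3]
      _ = -(Φinv k * Φinv k * (Dθ (Φ k) * Dθ (Φ k))) := by noncomm_ring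
      _ = 0 := by rw [hsq, mul_zero, neg_zero]
  -- main step
  have hstep : ∀ k, 2 * (Φ (k+1) * Ψ (k+1)) + Dθ (f (k+1)) = 2 * (Φ k * Ψ k) + Dθ (f k) := by
    intro k
    have hdxev : ev (dx (Φ k)) := by
      rw [← hDθsq]; exact hDθ_od _ (hDθ_ev _ (hΦ_ev k))
    have hbda : Dθ (Φinv k * Dθ (Φ k)) = Φinv k * dx (Φ k) := by
      rw [hLeib_ev _ _ (hΦinv_ev k), hkey k, hDθsq, zero_add]
    have h2x : Dθ (2 * (Φinv k * Dθ (Φ k))) = 2 * (Φinv k * dx (Φ k)) := by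
      rw [two_mul, hDθ_add, hbda, ← two_mul]
    have hDf : Dθ (f (k+1)) = -(2 * (Φinv k * dx (Φ k))) - Dθ (f k) := by
      rw [hfrec k, sub_eq_add_neg, hDθ_add, hDθ_neg, hDθ_neg, h2x, ← sub_eq_add_neg]
    have hT1 : Φ k * (Φinv k * dx (Φ k)) * Φinv k = Φinv k * dx (Φ k) := by
      rw [← mul_assoc, hinv k, one_mul, hev_central _ _ hdxev]
    have hT2 : Φ k * Dθ (f k) * Φinv k = Dθ (f k) := by
      rw [show Φ k * Dθ (f k) = Dθ (f k) * Φ k from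
        (hev_central _ _ (hDθ_od _ (hf_od k))).symm, mul_assoc, hinv k, mul_one]
    have hT3 : Φ k * Φ k * Ψ k * Φinv k = Φ k * Ψ k := by
      calc Φ k * Φ k * Ψ k * Φinv k
          = Φ k * Φ k * (Ψ k * Φinv k) := by rw [mul_assoc]
        _ = Φ k * Φ k * (Φinv k * Ψ k) := by rw [hev_central _ _ (hΨ_ev k)]
        _ = Φ k * (Φ k * Φinv k) * Ψ k := by noncomm_ring
        _ = Φ k * Ψ k := by rw [hinv k, mul_one]
    have hΦΨ : Φ (k+1) * Ψ (k+1) = Φinv k * dx (Φ k) + Dθ (f k) + Φ k * Ψ k := by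
      rw [hΦrec k, hΨrec k, add_mul, add_mul, hT1, hT2, hT3]
    rw [hΦΨ, hDf]
    noncomm_ring
  refine ⟨hstep, ?_⟩
  intro k
  induction k with
  | zero => exact hconstr0
  | succ n ih => rw [hstep n]; exact ih
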